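/- Let A, B ∈ ℝ^{n×n}, γ ≥ 0, λ ≥ 0, and let Q ∈ ℝ^{n×n} be symmetric positive definite. Suppose the 2n×2n block matrix [[Q − A Q A^T, −A Q], [−Q A^T, −Q]] − λ·[[γ² I, 0], [0, −I]] is positive semidefinite and that the spectral norm of B satisfies ‖B‖ ≤ γ. Then (A + B) Q (A + B)^T ⪯ Q, i.e., Q − (A + B) Q (A + B)^T is positive semidefinite. -/

import Mathlib

open Matrix

/-- The block LMI used for infinite-step safety of nonlinear systems certifies the
common Lyapunov inequality `(A + B) Q (A + B)ᵀ ⪯ Q` for every perturbation `B` of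
spectral norm at most `γ`. -/
theorem stmt_17 (n : ℕ) (A B : Matrix (Fin n) (Fin n) ℝ) (γ lam : ℝ)
    (hγ : 0 ≤ γ) (hlam : 0 ≤ lam)
    (Q : Matrix (Fin n) (Fin n) ℝ) (hQ : Q.PosDef)
    (hblock : (Matrix.fromBlocks (Q - A * Q * Aᵀ) (-(A * Q)) (-(Q * Aᵀ)) (-Q) -
        lam • Matrix.fromBlocks (γ ^ 2 • (1 : Matrix (Fin n) (Fin n) ℝ)) 0 0
          (-(1 : Matrix (Fin n) (Fin n) ℝ))).PosSemidef)
    (hB : ∀ v : Fin n → ℝ,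
      Real.sqrt (∑ i, ((B *ᵥ v) i) ^ 2) ≤ γ * Real.sqrt (∑ i, v i ^ 2)) :
    (Q - (A + B) * Q * (A + B)ᵀ).PosSemidef := by
  have hQH := hQ.isHermitian
  rw [Matrix.posSemidef_iff_dotProduct_mulVec]
  constructor
  · have h1 : ((A + B) * Q * (A + B)ᵀ).IsHermitian := by
      have := (hQ.posSemidef.mul_mul_conjTranspose_same (A + B)).isHermitian
      simpa using this
    exact hQH.sub h1
  · intro v
    -- Cauchy-Schwarz
    have hCS : ∀ u x : Fin n → ℝ, (u ⬝ᵥ x)^2 ≤ (u ⬝ᵥ u) * (x ⬝ᵥ x) := by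
      intro u x
      have := Finset.sum_mul_sq_le_sq_mul_sq Finset.univ u x
      simpa [dotProduct, sq] using this
    have hself : ∀ u : Fin n → ℝ, (0:ℝ) ≤ u ⬝ᵥ u := by
      intro u
      exact Finset.sum_nonneg fun i _ => mul_self_nonneg _
    -- squared version of hB
    have hBsq : ∀ u : Fin n → ℝ, (B *ᵥ u) ⬝ᵥ (B *ᵥ u) ≤ γ^2 * (u ⬝ᵥ u) := by
      intro u
      have h := hB u
      have h1 : (∑ i, ((B *ᵥ u) i) ^ 2) ≤ (γ * Real.sqrt (∑ i, u i ^ 2))^2 := by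
        have hs : (0:ℝ) ≤ ∑ i, ((B *ᵥ u) i) ^ 2 :=
          Finset.sum_nonneg fun i _ => sq_nonneg _
        nlinarith [Real.sq_sqrt hs, Real.sqrt_nonneg (∑ i, ((B *ᵥ u) i) ^ 2)]
      have hu : (0:ℝ) ≤ ∑ i, u i ^ 2 := Finset.sum_nonneg fun i _ => sq_nonneg _
      have h2 : (γ * Real.sqrt (∑ i, u i ^ 2))^2 = γ^2 * (∑ i, u i ^ 2) := by
        rw [mul_pow, Real.sq_sqrt hu]
      rw [h2] at h1
      simpa [dotProduct, sq] using h1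
    set w : Fin n → ℝ := Bᵀ *ᵥ v with hwdef
    -- bound on w
    have hw : w ⬝ᵥ w ≤ γ^2 * (v ⬝ᵥ v) := by
      have h1 : w ⬝ᵥ w = (B *ᵥ w) ⬝ᵥ v := by
        rw [hwdef]
        rw [Matrix.dotProduct_mulVec, Matrix.vecMul_transpose]
      have h2 : (w ⬝ᵥ w)^2 ≤ ((B *ᵥ w) ⬝ᵥ (B *ᵥ w)) * (v ⬝ᵥ v) := by
        rw [h1]; exact hCS _ _
      have h3 : (w ⬝ᵥ w)^2 ≤ (γ^2 * (w ⬝ᵥ w)) * (v ⬝ᵥ v) :=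
        h2.trans (mul_le_mul_of_nonneg_right (hBsq w) (hself v))
      rcases eq_or_lt_of_le (hself w) with h0 | h0
      · rw [← h0]; exact mul_nonneg (by positivity) (hself v)
      · nlinarith [hself v]
    -- apply block PSD to (v, w)
    have hz := hblock.dotProduct_mulVec_nonneg (Sum.elim v w)
    simp only [star_trivial, Matrix.sub_mulVec, Matrix.smul_mulVec,
      Matrix.fromBlocks_mulVec, Matrix.neg_mulVec, Matrix.one_mulVec, Matrix.zero_mulVec,
      Matrix.smul_mulVec, dotProduct_sub, dotProduct_smul, dotProduct_add,
      dotProduct_neg, sumElim_dotProduct_sumElim, add_zero, zero_add,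
      Sum.elim_comp_inl, Sum.elim_comp_inr, smul_eq_mul] at hz
    -- hz should now be an inequality in dot products; massage further below
    -- expand the goal
    simp only [star_trivial, Matrix.sub_mulVec, transpose_add, mul_add, add_mul,
      Matrix.add_mulVec, dotProduct_sub, dotProduct_add]
    -- rewrite cross terms
    have key : ∀ u : Fin n → ℝ, v ⬝ᵥ (B *ᵥ u) = w ⬝ᵥ u := by
      intro u
      rw [Matrix.dotProduct_mulVec, hwdef, ← Matrix.mulVec_transpose]
    have e1 : v ⬝ᵥ ((A * Q * Bᵀ) *ᵥ v) = v ⬝ᵥ ((A * Q) *ᵥ w) := by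
      rw [hwdef, Matrix.mulVec_mulVec]
    have e2 : v ⬝ᵥ ((B * Q * Aᵀ) *ᵥ v) = w ⬝ᵥ ((Q * Aᵀ) *ᵥ v) := by
      rw [Matrix.mul_assoc, ← Matrix.mulVec_mulVec, key]
    have e3 : v ⬝ᵥ ((B * Q * Bᵀ) *ᵥ v) = w ⬝ᵥ (Q *ᵥ w) := by
      rw [Matrix.mul_assoc, ← Matrix.mulVec_mulVec, key, ← Matrix.mulVec_mulVec, ← hwdef]
    have hnn : 0 ≤ lam * (γ ^ 2 * (v ⬝ᵥ v) - w ⬝ᵥ w) :=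
      mul_nonneg hlam (sub_nonneg.2 hw)
    rw [e1, e2, e3]
    linarith [hz]
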